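/- arXiv:1907.00268 — 2 statements merged into one kernel-verified Lean document; each statement's English description precedes it below -/
import Mathlib

section
/- For all integers n≥0, r≥0, k≥1 and every weak composition β=(β_1,…,β_m) of n, the map that adds 1 to every letter of every block is a bijection from OP^all_{r;β,k} onto OP_{0;(r,β_1,…,β_m),k} (ordered multiset partitions with content (r,β_1,…,β_m) and no zeros) that preserves each of the statistics inv, maj, dinv and minimaj; consequently D^{stat+}_{r;(β_1,…,β_m),k}(q)=D^{stat}_{0;(r,β_1,…,β_m),k}(q) for each stat∈{inv, maj, dinv, minimaj}. -/
open scoped BigOperators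

namespace omp

/-- The multiset `A(β) ∪ {0^r}`: the letter `i` (for `1 ≤ i ≤ m`) with multiplicity `β_i`,
together with `r` copies of the letter `0`. -/
def content (r : ℕ) (β : List ℕ) : Multiset ℕ :=
  Multiset.replicate r 0 +
    ∑ i ∈ Finset.range β.length, Multiset.replicate (β.getD i 0) (i + 1)

/-- `π` is an ordered multiset partition of `A(β) ∪ {0^r}` into `k` (nonempty) blocks,
with `0` allowed anywhere: the set `OP^all_{r;β,k}`. -/
def IsOPall (r : ℕ) (β : List ℕ) (k : ℕ) (π : List (Finset ℕ)) : Prop :=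
  π.length = k ∧ (∀ B ∈ π, B.Nonempty) ∧ (π.map Finset.val).sum = content r β

/-- Additionally, the last block does not contain `0`: the set `OP_{r;β,k}`. -/
def IsOP (r : ℕ) (β : List ℕ) (k : ℕ) (π : List (Finset ℕ)) : Prop :=
  IsOPall r β k π ∧ 0 ∉ π.getLastD ∅

/-- Ordered multiset partitions of `A(β) ∪ {0^r}` with shape `α`: `OP^all_{r;β,α}`. -/
def IsOPallSh (r : ℕ) (β α : List ℕ) (π : List (Finset ℕ)) : Prop :=
  (∀ B ∈ π, B.Nonempty) ∧ (π.map Finset.val).sum = content r β ∧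
    π.map Finset.card = α

/-- Shape `α` and last block avoiding `0`: `OP_{r;β,α}`. -/
def IsOPSh (r : ℕ) (β α : List ℕ) (π : List (Finset ℕ)) : Prop :=
  IsOPallSh r β α π ∧ 0 ∉ π.getLastD ∅

/-- The `i`-th block (0-indexed). -/
def blk (π : List (Finset ℕ)) (i : ℕ) : Finset ℕ := π.getD i ∅

open Classical in
/-- `inv`: pairs of a letter `a` in block `B_i` and the minimum `b` of a later block `B_j`
with `a > b`. -/
noncomputable def inv (π : List (Finset ℕ)) : ℕ :=
  ∑ i ∈ Finset.range π.length, ∑ j ∈ Finset.range π.length,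
    if i < j then
      ((blk π i).filter (fun (a : ℕ) => (blk π j).min < (a : WithBot ℕ))).card
    else 0

/-- The word `σ(π)`: each block written in decreasing order, blocks concatenated. -/
def sigmaWord (π : List (Finset ℕ)) : List ℕ :=
  (π.map (fun B => (B.sort (· ≤ ·)).reverse)).flatten

/-- The word `ind(π) = 0^{|B_1|} 1^{|B_2|} ⋯ (k-1)^{|B_k|}`. -/
def indWord (π : List (Finset ℕ)) : List ℕ :=
  (π.zipIdx.map (fun p => List.replicate p.1.card p.2)).flatten

/-- The major index of a word (positions are 1-based). -/
def majW (w : List ℕ) : ℕ :=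
  ∑ i ∈ Finset.range (w.length - 1),
    if w.getD (i + 1) 0 < w.getD i 0 then i + 1 else 0

/-- `maj(π)`: the sum of `ind(π)_{i+1}` over descents `σ_i > σ_{i+1}` of `σ(π)`. -/
def maj (π : List (Finset ℕ)) : ℕ :=
  ∑ i ∈ Finset.range ((sigmaWord π).length - 1),
    if (sigmaWord π).getD (i + 1) 0 < (sigmaWord π).getD i 0 then
      (indWord π).getD (i + 1) 0
    else 0

/-- `dinv(π)`: primary and secondary diagonal inversions, where `B_i^h` is the `h`-th smallest
element of block `B_i` (here `h` is 0-indexed). -/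
def dinv (π : List (Finset ℕ)) : ℕ :=
  ∑ i ∈ Finset.range π.length, ∑ j ∈ Finset.range π.length,
    if i < j then
      ((Finset.range (blk π i).card).filter (fun h =>
          h < (blk π j).card ∧
            ((blk π j).sort (· ≤ ·)).getD h 0 < ((blk π i).sort (· ≤ ·)).getD h 0)).card +
      ((Finset.range (blk π i).card).filter (fun h =>
          h + 1 < (blk π j).card ∧
            ((blk π j).sort (· ≤ ·)).getD (h + 1) 0 < ((blk π i).sort (· ≤ ·)).getD h 0)).card
    else 0

/-- `miniword(π)`, built from right to left: the last block in increasing order; inductively,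
if the word built so far begins with `s`, block `B_i` contributes its elements greater than `s`
in increasing order followed by its elements at most `s` in increasing order. -/
def miniword : List (Finset ℕ) → List ℕ
  | [] => []
  | B :: rest =>
    match miniword rest with
    | [] => B.sort (· ≤ ·)
    | s :: w =>
        ((B.filter (fun x => s < x)).sort (· ≤ ·) ++
          (B.filter (fun x => x ≤ s)).sort (· ≤ ·)) ++ s :: w

/-- `minimaj(π) = maj(miniword(π))`. -/
def minimaj (π : List (Finset ℕ)) : ℕ := majW (miniword π)

/-- `D^{stat}_{r;β,k}(q) = Σ_{π ∈ OP_{r;β,k}} q^{stat(π)}` (the set is finite, so the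
finite-support sum below is the intended polynomial). -/
noncomputable def D (r : ℕ) (β : List ℕ) (k : ℕ)
    (stat : List (Finset ℕ) → ℕ) : Polynomial ℕ :=
  ∑ᶠ π ∈ {π | IsOP r β k π}, Polynomial.X ^ stat π

/-- `D^{stat+}_{r;β,k}(q) = Σ_{π ∈ OP^all_{r;β,k}} q^{stat(π)}`. -/
noncomputable def Dall (r : ℕ) (β : List ℕ) (k : ℕ)
    (stat : List (Finset ℕ) → ℕ) : Polynomial ℕ :=
  ∑ᶠ π ∈ {π | IsOPall r β k π}, Polynomial.X ^ stat π

/-- `D^{stat}_{r;β,α}(q)`, the shape-refined generating function. -/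
noncomputable def DSh (r : ℕ) (β α : List ℕ)
    (stat : List (Finset ℕ) → ℕ) : Polynomial ℕ :=
  ∑ᶠ π ∈ {π | IsOPSh r β α π}, Polynomial.X ^ stat π

/-- `D^{stat+}_{r;β,α}(q)`, the shape-refined generating function with `0` allowed
in the last block. -/
noncomputable def DallSh (r : ℕ) (β α : List ℕ)
    (stat : List (Finset ℕ) → ℕ) : Polynomial ℕ :=
  ∑ᶠ π ∈ {π | IsOPallSh r β α π}, Polynomial.X ^ stat π

end omp



namespace ompAux

lemma finj : Function.Injective (· + 1 : ℕ → ℕ) := add_left_injective 1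

lemma sortImage (B : Finset ℕ) :
    (B.image (· + 1)).sort (· ≤ ·) = (B.sort (· ≤ ·)).map (· + 1) := by
  apply fun hp h1 h2 => List.Perm.eq_of_pairwise' (r := (· ≤ · : ℕ → ℕ → Prop)) h1 h2 hp
  · apply Multiset.coe_eq_coe.mp
    rw [Finset.sort_eq]
    have h2 : ((B.sort (· ≤ ·)).map (· + 1) : Multiset ℕ) = Multiset.map (· + 1) B.val := by
      rw [← Finset.sort_eq B (· ≤ ·), Multiset.map_coe]
    rw [h2, Finset.image_val, Multiset.Nodup.dedup]
    exact Multiset.Nodup.map finj B.nodup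
  · exact Finset.pairwise_sort _ _
  · exact List.Pairwise.map _ (fun a b h => Nat.add_le_add_right h 1)
      (Finset.pairwise_sort B (· ≤ ·))

lemma cardImage (B : Finset ℕ) : (B.image (· + 1)).card = B.card :=
  Finset.card_image_of_injective B finj

lemma blkMap (π : List (Finset ℕ)) (i : ℕ) :
    omp.blk (π.map (Finset.image (· + 1))) i = (omp.blk π i).image (· + 1) := by
  unfold omp.blk
  simpa using List.getD_map π ∅ (Finset.image (· + 1)) (n := i)

lemma minImage (B : Finset ℕ) :
    (B.image (· + 1)).min = WithTop.map (· + 1) B.min := by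
  rcases B.eq_empty_or_nonempty with h | h
  · subst h; simp
  · rw [← Finset.coe_min' h, ← Finset.coe_min' (h.image _),
      Finset.min'_image (f := (· + 1)) (fun a b hab => Nat.add_le_add_right hab 1),
      WithTop.map_coe]

open Classical in
lemma invFilterCard (Bi Bj : Finset ℕ) :
    ((Bi.image (· + 1)).filter
        (fun (a : ℕ) => (Bj.image (· + 1)).min < (a : WithBot ℕ))).card
      = (Bi.filter (fun (a : ℕ) => Bj.min < (a : WithBot ℕ))).card := by
  rw [Finset.filter_image, Finset.card_image_of_injective _ finj]
  congr 1
  apply Finset.filter_congr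
  intro a _
  rw [minImage]
  induction Bj.min using WithTop.recTopCoe with
  | top =>
    simp only [WithTop.map_top]
    exact iff_of_false not_top_lt not_top_lt
  | coe b =>
    rw [WithTop.map_coe]
    show ((b + 1 : ℕ) : WithTop ℕ) < ((a + 1 : ℕ) : WithTop ℕ)
        ↔ ((b : ℕ) : WithTop ℕ) < ((a : ℕ) : WithTop ℕ)
    rw [Nat.cast_lt, Nat.cast_lt]
    omega

lemma getD_map_zero (w : List ℕ) (i : ℕ) (h : i < w.length) :
    (w.map (· + 1)).getD i 0 = w.getD i 0 + 1 := by
  rw [List.getD_eq_getElem _ _ (by simpa using h), List.getD_eq_getElem _ _ h,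
    List.getElem_map]

end ompAux
namespace ompAux

lemma invMap (π : List (Finset ℕ)) :
    omp.inv (π.map (Finset.image (· + 1))) = omp.inv π := by
  unfold omp.inv
  rw [List.length_map]
  refine Finset.sum_congr rfl fun i _ => Finset.sum_congr rfl fun j _ => ?_
  split
  · rw [blkMap, blkMap, invFilterCard]
  · rfl

lemma sigmaMap (π : List (Finset ℕ)) :
    omp.sigmaWord (π.map (Finset.image (· + 1))) = (omp.sigmaWord π).map (· + 1) := by
  unfold omp.sigmaWord
  rw [List.map_map, List.map_flatten, List.map_map]
  congr 1
  apply List.map_congr_left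
  intro B _
  show ((B.image (· + 1)).sort (· ≤ ·)).reverse = ((B.sort (· ≤ ·)).reverse).map (· + 1)
  rw [sortImage, List.map_reverse]

lemma indMap (π : List (Finset ℕ)) :
    omp.indWord (π.map (Finset.image (· + 1))) = omp.indWord π := by
  unfold omp.indWord
  rw [List.zipIdx_map, List.map_map]
  congr 1
  apply List.map_congr_left
  intro p _
  show List.replicate ((p.1.image (· + 1)).card) p.2 = List.replicate p.1.card p.2
  rw [cardImage]

lemma majMap (π : List (Finset ℕ)) :
    omp.maj (π.map (Finset.image (· + 1))) = omp.maj π := by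
  unfold omp.maj
  rw [sigmaMap, indMap, List.length_map]
  refine Finset.sum_congr rfl fun i hi => ?_
  have hi' := Finset.mem_range.mp hi
  have h1 : i < (omp.sigmaWord π).length := by omega
  have h2 : i + 1 < (omp.sigmaWord π).length := by omega
  rw [getD_map_zero _ _ h1, getD_map_zero _ _ h2]
  congr 1
  simp only [eq_iff_iff]
  omega

lemma dinvMap (π : List (Finset ℕ)) :
    omp.dinv (π.map (Finset.image (· + 1))) = omp.dinv π := by
  unfold omp.dinv
  rw [List.length_map]
  refine Finset.sum_congr rfl fun i _ => Finset.sum_congr rfl fun j _ => ?_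
  split
  · rw [blkMap, blkMap, cardImage, cardImage, sortImage, sortImage]
    congr 1
    · congr 1
      apply Finset.filter_congr
      intro h hh
      have hhi : h < (omp.blk π i).card := Finset.mem_range.mp hh
      constructor
      · rintro ⟨hj, hlt⟩
        refine ⟨hj, ?_⟩
        rw [getD_map_zero _ _ (by rw [Finset.length_sort]; exact hj),
          getD_map_zero _ _ (by rw [Finset.length_sort]; exact hhi)] at hlt
        omega
      · rintro ⟨hj, hlt⟩
        refine ⟨hj, ?_⟩
        rw [getD_map_zero _ _ (by rw [Finset.length_sort]; exact hj),
          getD_map_zero _ _ (by rw [Finset.length_sort]; exact hhi)]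
        omega
    · congr 1
      apply Finset.filter_congr
      intro h hh
      have hhi : h < (omp.blk π i).card := Finset.mem_range.mp hh
      constructor
      · rintro ⟨hj, hlt⟩
        refine ⟨hj, ?_⟩
        rw [getD_map_zero _ _ (by rw [Finset.length_sort]; exact hj),
          getD_map_zero _ _ (by rw [Finset.length_sort]; exact hhi)] at hlt
        omega
      · rintro ⟨hj, hlt⟩
        refine ⟨hj, ?_⟩
        rw [getD_map_zero _ _ (by rw [Finset.length_sort]; exact hj),
          getD_map_zero _ _ (by rw [Finset.length_sort]; exact hhi)]
        omega
  · rfl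

lemma filterGtImage (B : Finset ℕ) (s : ℕ) :
    (B.image (· + 1)).filter (fun x => s + 1 < x)
      = (B.filter (fun x => s < x)).image (· + 1) := by
  rw [Finset.filter_image]
  congr 1
  apply Finset.filter_congr
  intro a _
  show s + 1 < a + 1 ↔ s < a
  omega

lemma filterLeImage (B : Finset ℕ) (s : ℕ) :
    (B.image (· + 1)).filter (fun x => x ≤ s + 1)
      = (B.filter (fun x => x ≤ s)).image (· + 1) := by
  rw [Finset.filter_image]
  congr 1
  apply Finset.filter_congr
  intro a _
  show a + 1 ≤ s + 1 ↔ a ≤ s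
  omega

lemma miniMap (π : List (Finset ℕ)) :
    omp.miniword (π.map (Finset.image (· + 1))) = (omp.miniword π).map (· + 1) := by
  induction π with
  | nil => simp [omp.miniword]
  | cons B rest ih =>
    rw [List.map_cons]
    show (match omp.miniword (rest.map (Finset.image (· + 1))) with
      | [] => (B.image (· + 1)).sort (· ≤ ·)
      | s :: w =>
          (((B.image (· + 1)).filter (fun x => s < x)).sort (· ≤ ·) ++
            ((B.image (· + 1)).filter (fun x => x ≤ s)).sort (· ≤ ·)) ++ s :: w)
      = (omp.miniword (B :: rest)).map (· + 1)
    rw [ih]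
    show _ = (match omp.miniword rest with
      | [] => B.sort (· ≤ ·)
      | s :: w =>
          ((B.filter (fun x => s < x)).sort (· ≤ ·) ++
            (B.filter (fun x => x ≤ s)).sort (· ≤ ·)) ++ s :: w).map (· + 1)
    cases h : omp.miniword rest with
    | nil =>
      simp only [List.map_nil]
      exact sortImage B
    | cons s w =>
      simp only [List.map_cons]
      rw [filterGtImage, filterLeImage, sortImage, sortImage]
      simp [List.map_append]

end ompAux
namespace ompAux

lemma majWMap (w : List ℕ) : omp.majW (w.map (· + 1)) = omp.majW w := by
  unfold omp.majW
  rw [List.length_map]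
  refine Finset.sum_congr rfl fun i hi => ?_
  have hi' := Finset.mem_range.mp hi
  rw [getD_map_zero _ _ (by omega), getD_map_zero _ _ (by omega)]
  congr 1
  simp only [eq_iff_iff]
  omega

lemma minimajMap (π : List (Finset ℕ)) :
    omp.minimaj (π.map (Finset.image (· + 1))) = omp.minimaj π := by
  unfold omp.minimaj
  rw [miniMap, majWMap]

lemma map_listsum (l : List (Multiset ℕ)) :
    (l.map (Multiset.map (· + 1))).sum = Multiset.map (· + 1) l.sum := by
  induction l with
  | nil => simp
  | cons m l ih => simp [ih]

lemma mem_listsum {l : List (Multiset ℕ)} {m : Multiset ℕ} (hm : m ∈ l) {a : ℕ}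
    (ha : a ∈ m) : a ∈ l.sum := by
  induction l with
  | nil => simp at hm
  | cons x l ih =>
    rw [List.mem_cons] at hm
    rw [List.sum_cons, Multiset.mem_add]
    rcases hm with h | h
    · exact Or.inl (h ▸ ha)
    · exact Or.inr (ih h)

lemma contentMap (r : ℕ) (β : List ℕ) :
    Multiset.map (· + 1) (omp.content r β) = omp.content 0 (r :: β) := by
  unfold omp.content
  rw [Multiset.map_add, Multiset.map_replicate]
  have hs : Multiset.map (· + 1) (∑ i ∈ Finset.range β.length,
        Multiset.replicate (β.getD i 0) (i + 1))
      = ∑ i ∈ Finset.range β.length,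
        Multiset.map (· + 1) (Multiset.replicate (β.getD i 0) (i + 1)) :=
    map_sum (Multiset.mapAddMonoidHom (· + 1)) _ (Finset.range β.length)
  rw [hs]
  simp only [Multiset.map_replicate]
  rw [Multiset.replicate_zero, zero_add, List.length_cons, Finset.sum_range_succ']
  simp only [List.getD_cons_succ, List.getD_cons_zero]
  rw [zero_add, add_comm]

lemma one_le_of_mem_content (r : ℕ) (β : List ℕ) {a : ℕ}
    (ha : a ∈ omp.content 0 (r :: β)) : 1 ≤ a := by
  rw [← contentMap] at ha
  obtain ⟨b, -, rfl⟩ := Multiset.mem_map.mp ha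
  omega

end ompAux
namespace ompAux

lemma valImage (B : Finset ℕ) : (B.image (· + 1)).val = Multiset.map (· + 1) B.val :=
  Finset.image_val_of_injOn finj.injOn

lemma contentImage (π : List (Finset ℕ)) :
    ((π.map (Finset.image (· + 1))).map Finset.val).sum
      = Multiset.map (· + 1) ((π.map Finset.val).sum) := by
  rw [List.map_map, ← map_listsum, List.map_map]
  congr 1
  apply List.map_congr_left
  intro B _
  exact valImage B

lemma mapsTo (r k : ℕ) (β : List ℕ) {π : List (Finset ℕ)} (hπ : omp.IsOPall r β k π) :
    omp.IsOP 0 (r :: β) k (π.map (Finset.image (· + 1))) := by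
  obtain ⟨hlen, hne, hcont⟩ := hπ
  refine ⟨⟨by simpa using hlen, ?_, ?_⟩, ?_⟩
  · intro B hB
    obtain ⟨C, hC, rfl⟩ := List.mem_map.mp hB
    exact (hne C hC).image _
  · rw [contentImage, hcont, contentMap]
  · cases hp : π.map (Finset.image (· + 1)) with
    | nil => simp
    | cons C l =>
      intro h0
      have hmem : (C :: l).getLastD ∅ ∈ C :: l := by
        rw [List.getLastD_cons]
        exact List.getLastD_mem_cons
      rw [← hp] at hmem
      obtain ⟨D, _, hD⟩ := List.mem_map.mp hmem
      rw [← hp, ← hD] at h0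
      obtain ⟨b, -, hb⟩ := Finset.mem_image.mp h0
      omega

lemma recoverRho (ρ : List (Finset ℕ)) (hge : ∀ B ∈ ρ, ∀ a ∈ B, 1 ≤ a) :
    (ρ.map (Finset.image (· - 1))).map (Finset.image (· + 1)) = ρ := by
  rw [List.map_map]
  conv_rhs => rw [← List.map_id ρ]
  apply List.map_congr_left
  intro B hB
  show Finset.image (· + 1) (B.image (· - 1)) = B
  rw [Finset.image_image]
  rw [Finset.image_congr (g := id) fun a ha => ?_, Finset.image_id]
  have := hge B hB a ha
  show a - 1 + 1 = a
  omega

lemma surjOn (r k : ℕ) (β : List ℕ) {ρ : List (Finset ℕ)} (hρ : omp.IsOP 0 (r :: β) k ρ) :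
    ∃ π, omp.IsOPall r β k π ∧ π.map (Finset.image (· + 1)) = ρ := by
  obtain ⟨⟨hlen, hne, hcont⟩, -⟩ := hρ
  have hge : ∀ B ∈ ρ, ∀ a ∈ B, 1 ≤ a := by
    intro B hB a ha
    apply one_le_of_mem_content r β
    rw [← hcont]
    exact mem_listsum (List.mem_map_of_mem (f := Finset.val) hB) (by simpa using ha)
  have hrec := recoverRho ρ hge
  refine ⟨ρ.map (Finset.image (· - 1)), ⟨by simpa using hlen, ?_, ?_⟩, hrec⟩
  · intro B hB
    obtain ⟨C, hC, rfl⟩ := List.mem_map.mp hB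
    exact (hne C hC).image _
  · apply Multiset.map_injective finj
    rw [← contentImage, hrec, hcont, contentMap]

end ompAux

/-- Adding `1` to every letter is a statistic-preserving bijection from
`OP^all_{r;β,k}` onto `OP_{0;(r,β_1,…,β_m),k}`; consequently
`D^{stat+}_{r;β,k} = D^{stat}_{0;(r,β_1,…,β_m),k}` for each of the four statistics. -/
theorem addOne_bijection (n r k : ℕ) (hk : 1 ≤ k) (β : List ℕ) (hβ : β.sum = n) :
    Set.BijOn (fun π : List (Finset ℕ) => π.map (Finset.image (· + 1)))
      {π | omp.IsOPall r β k π} {π | omp.IsOP 0 (r :: β) k π} ∧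
    (∀ π, omp.IsOPall r β k π →
      omp.inv (π.map (Finset.image (· + 1))) = omp.inv π ∧
      omp.maj (π.map (Finset.image (· + 1))) = omp.maj π ∧
      omp.dinv (π.map (Finset.image (· + 1))) = omp.dinv π ∧
      omp.minimaj (π.map (Finset.image (· + 1))) = omp.minimaj π) ∧
    omp.Dall r β k omp.inv = omp.D 0 (r :: β) k omp.inv ∧
    omp.Dall r β k omp.maj = omp.D 0 (r :: β) k omp.maj ∧
    omp.Dall r β k omp.dinv = omp.D 0 (r :: β) k omp.dinv ∧
    omp.Dall r β k omp.minimaj = omp.D 0 (r :: β) k omp.minimaj := by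
  classical
  have hbij : Set.BijOn (fun π : List (Finset ℕ) => π.map (Finset.image (· + 1)))
      {π | omp.IsOPall r β k π} {π | omp.IsOP 0 (r :: β) k π} := by
    refine ⟨fun π hπ => ompAux.mapsTo r k β hπ, ?_, ?_⟩
    · exact (List.map_injective_iff.mpr (Finset.image_injective ompAux.finj)).injOn
    · intro ρ hρ
      obtain ⟨π, hπ, heq⟩ := ompAux.surjOn r k β hρ
      exact ⟨π, hπ, heq⟩
  have hstat : ∀ π, omp.IsOPall r β k π →
      omp.inv (π.map (Finset.image (· + 1))) = omp.inv π ∧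
      omp.maj (π.map (Finset.image (· + 1))) = omp.maj π ∧
      omp.dinv (π.map (Finset.image (· + 1))) = omp.dinv π ∧
      omp.minimaj (π.map (Finset.image (· + 1))) = omp.minimaj π :=
    fun π _ => ⟨ompAux.invMap π, ompAux.majMap π, ompAux.dinvMap π, ompAux.minimajMap π⟩
  have hD : ∀ stat : List (Finset ℕ) → ℕ,
      (∀ π, stat (π.map (Finset.image (· + 1))) = stat π) →
      omp.Dall r β k stat = omp.D 0 (r :: β) k stat := by
    intro stat hs
    unfold omp.Dall omp.D
    exact finsum_mem_eq_of_bijOn _ hbij (fun π _ => by rw [hs π])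
  exact ⟨hbij, hstat, hD omp.inv ompAux.invMap, hD omp.maj ompAux.majMap,
    hD omp.dinv ompAux.dinvMap, hD omp.minimaj ompAux.minimajMap⟩
end

section
/- Let m≥1 and r≥0 be integers and let w=w_1⋯w_N be a word with all letters in {0,1,…,m}, exactly r letters equal to 0, and last letter w_N≠0. Let c.w be the word obtained by replacing every letter j of w by j−1 modulo m+1 (so 0 is replaced by m and j≥1 is replaced by j−1). Then maj(c.w) = maj(w) + r. -/
open scoped BigOperators

private def desW (w : List ℕ) : ℕ :=
  ∑ i ∈ Finset.range (w.length - 1),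
    if w.getD (i + 1) 0 < w.getD i 0 then 1 else 0

private lemma majW_cons (a b : ℕ) (t : List ℕ) :
    omp.majW (a :: b :: t) =
      (if b < a then 1 else 0) + omp.majW (b :: t) + desW (b :: t) := by
  unfold omp.majW desW
  simp only [List.length_cons, Nat.add_sub_cancel]
  rw [Finset.sum_range_succ']
  have h1 : ∀ i, (a :: b :: t).getD (i+1) 0 = (b :: t).getD i 0 := fun i => rfl
  simp only [h1]
  have h2 : ∀ i, ((if (b::t).getD (i+1) 0 < (b::t).getD i 0 then i + 1 + 1 else 0) : ℕ)
      = (if (b::t).getD (i+1) 0 < (b::t).getD i 0 then i + 1 else 0)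
        + (if (b::t).getD (i+1) 0 < (b::t).getD i 0 then 1 else 0) := by
    intro i; split <;> simp
  simp only [h2, Finset.sum_add_distrib]
  simp [List.getD]
  ring

private lemma desW_cons (a b : ℕ) (t : List ℕ) :
    desW (a :: b :: t) = (if b < a then 1 else 0) + desW (b :: t) := by
  unfold desW
  simp only [List.length_cons, Nat.add_sub_cancel]
  rw [Finset.sum_range_succ']
  have h1 : ∀ i, (a :: b :: t).getD (i+1) 0 = (b :: t).getD i 0 := fun i => rfl
  simp only [h1]
  simp [List.getD]
  ring

private lemma shift_eq (m c : ℕ) (hc : c ≤ m) :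
    (c + m) % (m + 1) = if c = 0 then m else c - 1 := by
  rcases Nat.eq_zero_or_pos c with h | h
  · subst h; simp [Nat.mod_eq_of_lt (by omega : m < m + 1)]
  · rw [if_neg (by omega)]
    have : c + m = (m + 1) + (c - 1) := by omega
    rw [this, Nat.add_mod_left, Nat.mod_eq_of_lt (by omega)]

private lemma shift_cmp (m a b : ℕ) (hm : 1 ≤ m) (ha : a ≤ m) (hb : b ≤ m) :
    ((if b = 0 then 1 else 0) +
      (if (b + m) % (m + 1) < (a + m) % (m + 1) then 1 else 0) : ℕ) =
    (if b < a then 1 else 0) + (if a = 0 then 1 else 0) := by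
  rw [shift_eq m a ha, shift_eq m b hb]
  split_ifs <;> omega

private lemma key (m : ℕ) (hm : 1 ≤ m) :
    ∀ (w : List ℕ) (hw : w ≠ []), (∀ x ∈ w, x ≤ m) → w.getLast hw ≠ 0 →
      desW (w.map (fun j => (j + m) % (m + 1)))
          = desW w + (if w.headD 1 = 0 then 1 else 0)
      ∧ omp.majW (w.map (fun j => (j + m) % (m + 1)))
          = omp.majW w + w.count 0 := by
  intro w
  induction w with
  | nil => intro hw; exact absurd rfl hw
  | cons a t ih =>
    intro hw hlet hlast
    match t, ih with
    | [], _ =>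
      have ha : a ≠ 0 := by simpa using hlast
      constructor
      · simp [desW, ha]
      · simp [omp.majW, List.count_cons, ha]
    | b :: t', ih =>
      have hlet' : ∀ x ∈ b :: t', x ≤ m := fun x hx => hlet x (List.mem_cons_of_mem a hx)
      have hlast' : (b :: t').getLast (by simp) ≠ 0 := by
        rwa [List.getLast_cons (by simp : b :: t' ≠ [])] at hlast
      obtain ⟨hdes, hmaj⟩ := ih (by simp) hlet' hlast'
      have ha : a ≤ m := hlet a (by simp)
      have hb : b ≤ m := hlet b (by simp)
      have hcmp := shift_cmp m a b hm ha hb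
      have hmapeq : (a :: b :: t').map (fun j => (j + m) % (m + 1))
          = ((a + m) % (m + 1)) :: ((b + m) % (m + 1)) ::
            (t'.map (fun j => (j + m) % (m + 1))) := rfl
      have hmapeq2 : ((b + m) % (m + 1)) :: (t'.map (fun j => (j + m) % (m + 1)))
          = (b :: t').map (fun j => (j + m) % (m + 1)) := rfl
      constructor
      · rw [hmapeq, desW_cons, hmapeq2, hdes, desW_cons]
        simp only [List.headD_cons] at *
        grind
      · rw [hmapeq, majW_cons, hmapeq2, hdes, hmaj, majW_cons]
        simp only [List.headD_cons, List.count_cons, beq_iff_eq] at *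
        grind


/-- If `w` has letters in `{0,…,m}`, exactly `r` zeros, and a nonzero last
letter, then the letterwise shift `j ↦ j − 1 (mod m+1)` increases the major index by `r`. -/
theorem maj_cycle_shift (m r : ℕ) (hm : 1 ≤ m) (w : List ℕ) (hw : w ≠ [])
    (hlet : ∀ x ∈ w, x ≤ m) (hr : w.count 0 = r) (hlast : w.getLast hw ≠ 0) :
    omp.majW (w.map (fun j => (j + m) % (m + 1))) = omp.majW w + r := by
  rw [← hr]
  exact (key m hm w hw hlet hlast).2
end
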